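/- Let p > 2 be a prime and a, b integers. Then T^{a,b}_{p−1} ≡ (b² − 4a²)^{(p−1)/2} (mod p); consequently, if p does not divide b² − 4a², then (T^{a,b}_{p−1})² ≡ 1 (mod p). -/
import Mathlib


open Polynomial

/-- The generalized central trinomial coefficient `T^{a,b}_n`:
the coefficient of `X^n` in `(a + bX + aX^2)^n`. -/
noncomputable def genTrinomial (a b : ℤ) (n : ℕ) : ℤ :=
  ((C a + C b * X + C a * X ^ 2) ^ n).coeff n

/-- The generalized Motzkin number `M^{a,b}_n`:
the coefficient of `X^n` in `(a + bX + aX^2)^n * (1 - X^2)`. -/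
noncomputable def genMotzkin (a b : ℤ) (n : ℕ) : ℤ :=
  (((C a + C b * X + C a * X ^ 2) ^ n) * (1 - X ^ 2)).coeff n

private lemma sum_even_aux {M : Type*} [AddCommMonoid M] (F : ℕ → M)
    (hF : ∀ k, ¬ Even k → F k = 0) (h : ℕ) :
    ∑ k ∈ Finset.range (2 * h + 1), F k = ∑ m ∈ Finset.range (h + 1), F (2 * m) := by
  induction h with
  | zero => simp
  | succ h ih =>
    rw [show 2 * (h + 1) + 1 = (2 * h + 1) + 1 + 1 by ring,
      Finset.sum_range_succ, Finset.sum_range_succ (n := 2 * h + 1), ih,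
      hF (2 * h + 1) (by rw [Nat.even_iff]; omega), add_zero,
      Finset.sum_range_succ (f := fun m => F (2 * m)) (n := h + 1), Nat.mul_succ]

private lemma genTrinomial_eq (a b : ℤ) (n : ℕ) :
    genTrinomial a b n = ∑ k ∈ Finset.range (n + 1),
      (if Even k then ((k.choose (k / 2) : ℤ)) else 0) * (n.choose k : ℤ) * a ^ k * b ^ (n - k) := by
  have hf : (C a + C b * X + C a * X ^ 2 : ℤ[X]) = C a * (1 + X ^ 2) + C b * X := by ring
  rw [genTrinomial, hf, add_pow, finset_sum_coeff]
  apply Finset.sum_congr rfl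
  intro k hk
  have hkn : k ≤ n := by have := Finset.mem_range.mp hk; omega
  have ht : (C a * (1 + X ^ 2)) ^ k * (C b * X) ^ (n - k) * ((n.choose k : ℕ) : ℤ[X])
      = C (a ^ k * b ^ (n - k) * (n.choose k : ℤ)) * ((1 + X ^ 2) ^ k * X ^ (n - k)) := by
    simp only [← C_eq_natCast, map_mul, mul_pow, ← C_pow]
    ring
  rw [ht, coeff_C_mul, coeff_mul_X_pow', if_pos (Nat.sub_le n k),
    show n - (n - k) = k by omega]
  have hc : ((1 + X ^ 2 : ℤ[X]) ^ k).coeff k = if Even k then (k.choose (k / 2) : ℤ) else 0 := by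
    have hexp : ((1 : ℤ[X]) + X ^ 2) = expand ℤ 2 (1 + X) := by
      simp [map_add, expand_X]
    rw [hexp, ← map_pow, coeff_expand (by norm_num : 0 < 2)]
    rcases Nat.even_or_odd k with he | ho
    · rw [if_pos (by rw [Nat.even_iff] at he; omega), if_pos he, coeff_one_add_X_pow]
    · rw [if_neg (by rw [Nat.odd_iff] at ho; omega),
        if_neg (by rw [Nat.even_iff]; rw [Nat.odd_iff] at ho; omega)]
  rw [hc]
  ring

private lemma genTrinomial_eq_even (a b : ℤ) (h : ℕ) :
    genTrinomial a b (2 * h) = ∑ m ∈ Finset.range (h + 1),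
      ((2 * m).choose m : ℤ) * ((2 * h).choose (2 * m) : ℤ) * a ^ (2 * m) * b ^ (2 * h - 2 * m) := by
  rw [genTrinomial_eq, sum_even_aux _ (fun k hk => by rw [if_neg hk, zero_mul, zero_mul, zero_mul]) h]
  apply Finset.sum_congr rfl
  intro m _
  rw [if_pos (even_two_mul m), Nat.mul_div_cancel_left m (by norm_num)]

private lemma choose_sub_one_cast (p : ℕ) (hp : p.Prime) :
    ∀ k, k ≤ p - 1 → ((Nat.choose (p - 1) k : ℕ) : ZMod p) = (-1) ^ k := by
  have h2 := hp.two_le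
  intro k
  induction k with
  | zero => simp
  | succ k ih =>
    intro hk
    have hk' : k ≤ p - 1 := by omega
    have h3 : Nat.choose p (k + 1) = Nat.choose (p - 1) k + Nat.choose (p - 1) (k + 1) := by
      rw [show p = (p - 1) + 1 by omega, Nat.choose_succ_succ]
      simp [show p - 1 + 1 - 1 = p - 1 by omega]
    have hdvd : p ∣ Nat.choose p (k + 1) := hp.dvd_choose_self (by omega) (by omega)
    have h0 : ((Nat.choose p (k + 1) : ℕ) : ZMod p) = 0 :=
      (ZMod.natCast_eq_zero_iff _ _).mpr hdvd
    rw [h3] at h0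
    push_cast at h0
    rw [ih hk'] at h0
    have : ((Nat.choose (p - 1) (k + 1) : ℕ) : ZMod p) = -((-1) ^ k) := by
      linear_combination h0
    rw [this, pow_succ]
    ring

private lemma central_cast (p : ℕ) (hp : p.Prime) (h : ℕ) (hh : 2 * h = p - 1) :
    ∀ m, m ≤ h → (((2 * m).choose m : ℕ) : ZMod p) = (-4) ^ m * ((h.choose m : ℕ) : ZMod p) := by
  have h2 := hp.two_le
  haveI : Fact p.Prime := ⟨hp⟩
  have hcast : (2 : ZMod p) * (h : ZMod p) = -1 := by
    have := congrArg (Nat.cast : ℕ → ZMod p) hh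
    push_cast [Nat.cast_sub (by omega : 1 ≤ p)] at this
    rw [ZMod.natCast_self] at this
    linear_combination this
  intro m
  induction m with
  | zero => simp
  | succ m ih =>
    intro hm
    have hm' : m ≤ h := by omega
    have ihm := ih hm'
    have e1 : (m + 1) * ((2 * (m + 1)).choose (m + 1)) = 2 * (2 * m + 1) * ((2 * m).choose m) := by
      have := Nat.succ_mul_centralBinom_succ m
      rwa [Nat.centralBinom_eq_two_mul_choose, Nat.centralBinom_eq_two_mul_choose] at this
    have e2 : h.choose (m + 1) * (m + 1) = h.choose m * (h - m) := Nat.choose_succ_right_eq h m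
    have c1 := congrArg (Nat.cast : ℕ → ZMod p) e1
    have c2 := congrArg (Nat.cast : ℕ → ZMod p) e2
    push_cast at c1
    push_cast [Nat.cast_sub hm'] at c2
    have key : (-4 : ZMod p) * ((h : ZMod p) - (m : ZMod p)) = 2 * (2 * (m : ZMod p) + 1) := by
      linear_combination (-2 : ZMod p) * hcast
    have hunit : ((m : ZMod p) + 1) ≠ 0 := by
      have h1 : (((m + 1 : ℕ)) : ZMod p) ≠ 0 := by
        rw [Ne, ZMod.natCast_eq_zero_iff]
        intro hd
        have := Nat.le_of_dvd (by omega) hd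
        omega
      push_cast at h1
      exact h1
    apply mul_left_cancel₀ hunit
    linear_combination c1 + 2 * (2 * (m : ZMod p) + 1) * ihm - (-4 : ZMod p) ^ (m + 1) * c2
      - (-4 : ZMod p) ^ m * ((h.choose m : ℕ) : ZMod p) * key

theorem stmt5 (p : ℕ) (hp : p.Prime) (hp2 : 2 < p) (a b : ℤ) :
    genTrinomial a b (p - 1) ≡ (b ^ 2 - 4 * a ^ 2) ^ ((p - 1) / 2) [ZMOD (p : ℤ)] ∧
      (¬ (p : ℤ) ∣ (b ^ 2 - 4 * a ^ 2) →
        (genTrinomial a b (p - 1)) ^ 2 ≡ 1 [ZMOD (p : ℤ)]) := by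
  haveI : Fact p.Prime := ⟨hp⟩
  obtain ⟨h, hph⟩ : ∃ h, p = 2 * h + 1 := by
    have := Nat.odd_iff.mp (hp.odd_of_ne_two (by omega))
    exact ⟨(p - 1) / 2, by omega⟩
  have h2h : 2 * h = p - 1 := by omega
  have hdiv : (p - 1) / 2 = h := by omega
  have key : ((genTrinomial a b (p - 1) : ℤ) : ZMod p)
      = ((b : ZMod p) ^ 2 - 4 * (a : ZMod p) ^ 2) ^ h := by
    have hrhs : ((b : ZMod p) ^ 2 - 4 * (a : ZMod p) ^ 2) ^ h
        = ∑ m ∈ Finset.range (h + 1),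
          (-(4 * (a : ZMod p) ^ 2)) ^ m * ((b : ZMod p) ^ 2) ^ (h - m) * ((h.choose m : ℕ) : ZMod p) := by
      rw [show (b : ZMod p) ^ 2 - 4 * (a : ZMod p) ^ 2
        = -(4 * (a : ZMod p) ^ 2) + (b : ZMod p) ^ 2 by ring, add_pow]
    rw [← h2h, genTrinomial_eq_even, hrhs]
    push_cast
    apply Finset.sum_congr rfl
    intro m hm
    have hmh : m ≤ h := by have := Finset.mem_range.mp hm; omega
    have e1 := central_cast p hp h h2h m hmh
    have e2 : (((2 * h).choose (2 * m) : ℕ) : ZMod p) = 1 := by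
      rw [h2h, choose_sub_one_cast p hp (2 * m) (by omega), pow_mul]
      norm_num
    have e3 : ((b : ZMod p)) ^ (2 * h - 2 * m) = (((b : ZMod p)) ^ 2) ^ (h - m) := by
      rw [show 2 * h - 2 * m = 2 * (h - m) by omega, pow_mul]
    rw [e1, e2, e3]
    ring
  constructor
  · rw [hdiv, ← ZMod.intCast_eq_intCast_iff]
    push_cast
    rw [key]
  · intro hnd
    have hD : ((b : ZMod p) ^ 2 - 4 * (a : ZMod p) ^ 2) ≠ 0 := by
      intro h0
      apply hnd
      rw [← ZMod.intCast_zmod_eq_zero_iff_dvd]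
      push_cast
      exact h0
    rw [← ZMod.intCast_eq_intCast_iff]
    push_cast
    rw [key, ← pow_mul, show h * 2 = p - 1 by omega]
    exact ZMod.pow_card_sub_one_eq_one hD
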